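/- If a graph G with an orientation D has an Euler circuit extension as in the standard construction, then orienting each edge along an Euler circuit of a graph all of whose degrees are even yields |d⁺(v) − d⁻(v)| ≤ 1 for every vertex v; more generally, for any graph G there exists an orientation D of G such that |d⁺_D(v) − d⁻_D(v)| ≤ 1 for every vertex v. -/

import Mathlib

open Finset

/-- An orientation of a simple graph: each edge gets a tail and a head. -/
structure GraphOrientation {V : Type*} (G : SimpleGraph V) where
  tail : G.edgeSet → V
  head : G.edgeSet → V
  consistent : ∀ e : G.edgeSet, (e : Sym2 V) = s(tail e, head e)

/-- Vertex sum: sum of labels of in-edges minus sum of labels of out-edges. -/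
def vertexSum {V : Type*} {G : SimpleGraph V} [Fintype G.edgeSet] [DecidableEq V]
    (D : GraphOrientation G) (τ : G.edgeSet → ℤ) (v : V) : ℤ :=
  (∑ e : G.edgeSet, if D.head e = v then τ e else 0)
    - ∑ e : G.edgeSet, if D.tail e = v then τ e else 0

/-- In-degree of a vertex under an orientation. -/
def inDeg {V : Type*} {G : SimpleGraph V} [Fintype G.edgeSet] [DecidableEq V]
    (D : GraphOrientation G) (v : V) : ℕ :=
  (Finset.univ.filter fun e : G.edgeSet => D.head e = v).card

/-- Out-degree of a vertex under an orientation. -/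
def outDeg {V : Type*} {G : SimpleGraph V} [Fintype G.edgeSet] [DecidableEq V]
    (D : GraphOrientation G) (v : V) : ℕ :=
  (Finset.univ.filter fun e : G.edgeSet => D.tail e = v).card

/-- A graph admits an antimagic orientation. -/
def AdmitsAntimagicOrientation {V : Type*} [DecidableEq V] (G : SimpleGraph V)
    [Fintype G.edgeSet] : Prop :=
  ∃ (D : GraphOrientation G) (τ : G.edgeSet → ℤ),
    Set.BijOn τ Set.univ (Set.Icc (1 : ℤ) (Fintype.card G.edgeSet)) ∧
    Function.Injective (vertexSum D τ)

/-- The Mycielski construction. `Sum.inl a` are original vertices,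
`Sum.inr (Sum.inl a)` their images, `Sum.inr (Sum.inr ())` the apex `w`. -/
def mycielski {V : Type*} (G : SimpleGraph V) : SimpleGraph (V ⊕ (V ⊕ Unit)) where
  Adj x y :=
    match x, y with
    | .inl a, .inl b => G.Adj a b
    | .inl a, .inr (.inl b) => G.Adj a b
    | .inr (.inl a), .inl b => G.Adj a b
    | .inr (.inl _), .inr (.inr _) => True
    | .inr (.inr _), .inr (.inl _) => True
    | _, _ => False
  symm := by
    constructor
    rintro (a | b | c) (a' | b' | c') h <;> simp_all <;> exact G.adj_symm h
  loopless := by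
    constructor
    rintro (a | b | c) h <;> simp_all

set_option linter.unusedSectionVars false
namespace BalancedAux

variable {V : Type*} [Fintype V] [DecidableEq V] {G : SimpleGraph V} [Fintype G.edgeSet]

noncomputable def tl (σ : G.edgeSet → Bool) (e : G.edgeSet) : V :=
  if σ e then ((e : Sym2 V).out).1 else ((e : Sym2 V).out).2

noncomputable def hd (σ : G.edgeSet → Bool) (e : G.edgeSet) : V :=
  if σ e then ((e : Sym2 V).out).2 else ((e : Sym2 V).out).1

lemma eq_mk (σ : G.edgeSet → Bool) (e : G.edgeSet) :
    (e : Sym2 V) = s(tl σ e, hd σ e) := by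
  unfold tl hd
  split
  · exact (Quot.out_eq (e : Sym2 V)).symm
  · rw [Sym2.eq_swap]; exact (Quot.out_eq (e : Sym2 V)).symm

lemma tl_of_flip {σ σ' : G.edgeSet → Bool} {e : G.edgeSet} (h : σ' e = !(σ e)) :
    tl σ' e = hd σ e := by
  cases hσ : σ e <;> simp [tl, hd, h, hσ]

lemma hd_of_flip {σ σ' : G.edgeSet → Bool} {e : G.edgeSet} (h : σ' e = !(σ e)) :
    hd σ' e = tl σ e := by
  cases hσ : σ e <;> simp [tl, hd, h, hσ]

lemma tl_of_same {σ σ' : G.edgeSet → Bool} {e : G.edgeSet} (h : σ' e = σ e) :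
    tl σ' e = tl σ e := by simp [tl, h]

lemma hd_of_same {σ σ' : G.edgeSet → Bool} {e : G.edgeSet} (h : σ' e = σ e) :
    hd σ' e = hd σ e := by simp [hd, h]

/-- out minus in, as a sum. -/
noncomputable def dffS (σ : G.edgeSet → Bool) (x : V) : ℤ :=
  ∑ e : G.edgeSet, ((if tl σ e = x then (1 : ℤ) else 0) - (if hd σ e = x then 1 else 0))

inductive IsWalk (σ : G.edgeSet → Bool) : V → V → List G.edgeSet → Prop
  | nil (v : V) : IsWalk σ v v []
  | cons {a c : V} (e : G.edgeSet) {b : V} {L : List G.edgeSet}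
      (h1 : tl σ e = a) (h2 : hd σ e = b) (hw : IsWalk σ b c L) : IsWalk σ a c (e :: L)

lemma walk_append {σ : G.edgeSet → Bool} {a b c : V} {L1 L2 : List G.edgeSet}
    (h1 : IsWalk σ a b L1) (h2 : IsWalk σ b c L2) : IsWalk σ a c (L1 ++ L2) := by
  induction h1 with
  | nil => simpa using h2
  | cons e he1 he2 hw ih => exact IsWalk.cons e he1 he2 (ih h2)

lemma walk_split {σ : G.edgeSet → Bool} {a c : V} {L1 L2 : List G.edgeSet}
    (h : IsWalk σ a c (L1 ++ L2)) : ∃ b, IsWalk σ a b L1 ∧ IsWalk σ b c L2 := by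
  induction L1 generalizing a with
  | nil => exact ⟨a, IsWalk.nil a, by simpa using h⟩
  | cons e L1 ih =>
    cases h with
    | cons e h1 h2 hw =>
      obtain ⟨b, hb1, hb2⟩ := ih hw
      exact ⟨b, IsWalk.cons e h1 h2 hb1, hb2⟩

lemma not_nodup_split {α : Type*} [DecidableEq α] (L : List α) (h : ¬ L.Nodup) :
    ∃ (x : α) (L1 L2 L3 : List α), L = L1 ++ (x :: (L2 ++ (x :: L3))) := by
  induction L with
  | nil => simp at h
  | cons a L ih =>
    by_cases ha : a ∈ L
    · obtain ⟨s, t, rfl⟩ := List.append_of_mem ha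
      exact ⟨a, [], s, t, by simp⟩
    · have hL : ¬ L.Nodup := by
        simp only [List.nodup_cons] at h; tauto
      obtain ⟨x, L1, L2, L3, rfl⟩ := ih hL
      exact ⟨x, a :: L1, L2, L3, rfl⟩

lemma exists_nodup_walk {σ : G.edgeSet → Bool} {a b : V} {L : List G.edgeSet}
    (h : IsWalk σ a b L) : ∃ L', IsWalk σ a b L' ∧ L'.Nodup := by
  classical
  have main : ∀ n (L : List G.edgeSet), L.length = n → IsWalk σ a b L →
      ∃ L', IsWalk σ a b L' ∧ L'.Nodup := by
    intro n
    induction n using Nat.strong_induction_on with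
    | _ n ih =>
      intro L hlen hw
      by_cases hnd : L.Nodup
      · exact ⟨L, hw, hnd⟩
      · obtain ⟨x, L1, L2, L3, rfl⟩ := not_nodup_split _ hnd
        obtain ⟨c1, h1, h2⟩ := walk_split hw
        cases h2 with
        | cons _ h2a h2b h2c =>
          obtain ⟨c2, h3, h4⟩ := walk_split h2c
          cases h4 with
          | cons _ h4a h4b h4c =>
            have hw' : IsWalk σ a b (L1 ++ (x :: L3)) :=
              walk_append h1 (IsWalk.cons x h2a rfl (h4b ▸ h4c))
            refine ih (L1 ++ (x :: L3)).length ?_ _ rfl hw'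
            subst hlen
            simp only [List.length_append, List.length_cons]
            omega
  exact main L.length L rfl h

lemma walk_count {σ : G.edgeSet → Bool} {a b : V} {L : List G.edgeSet}
    (h : IsWalk σ a b L) (x : V) :
    (L.countP (fun e => decide (hd σ e = x)) : ℤ)
      - (L.countP (fun e => decide (tl σ e = x)) : ℤ)
      = (if x = b then 1 else 0) - (if x = a then 1 else 0) := by
  induction h with
  | nil v => simp
  | cons e h1 h2 hw ih =>
    rename_i a' c' b' L'
    simp only [List.countP_cons, h1, h2, decide_eq_true_eq, @eq_comm _ b' x, @eq_comm _ a' x]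
    push_cast
    have h3 := ih
    split_ifs at h3 ⊢ <;> omega

lemma sum_ite_toFinset {α : Type*} [DecidableEq α] (P : α → Prop) [DecidablePred P] :
    ∀ (L : List α), L.Nodup →
      ∑ e ∈ L.toFinset, (if P e then (1:ℤ) else 0) = L.countP (fun a => decide (P a))
  | [], _ => by simp
  | a :: L, hN => by
    simp only [List.nodup_cons] at hN
    rw [List.toFinset_cons, Finset.sum_insert (by simp [hN.1]), sum_ite_toFinset P L hN.2,
      List.countP_cons]
    by_cases h : P a <;> simp [h] <;> push_cast <;> ring

lemma dffS_flip (σ : G.edgeSet → Bool) (L : List G.edgeSet) (hN : L.Nodup) (x : V) :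
    dffS (fun e => if e ∈ L then !σ e else σ e) x
      = dffS σ x + 2 * ((L.countP (fun e => decide (hd σ e = x)) : ℤ)
          - (L.countP (fun e => decide (tl σ e = x)) : ℤ)) := by
  classical
  set σ' : G.edgeSet → Bool := fun e => if e ∈ L then !σ e else σ e with hσ'
  have step : ∀ e : G.edgeSet,
      ((if tl σ' e = x then (1 : ℤ) else 0) - (if hd σ' e = x then 1 else 0))
        = ((if tl σ e = x then (1 : ℤ) else 0) - (if hd σ e = x then 1 else 0))
          + (if e ∈ L then 2 * ((if hd σ e = x then (1:ℤ) else 0)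
              - (if tl σ e = x then 1 else 0)) else 0) := by
    intro e
    by_cases he : e ∈ L
    · have h1 : tl σ' e = hd σ e := tl_of_flip (by simp [hσ', he])
      have h2 : hd σ' e = tl σ e := hd_of_flip (by simp [hσ', he])
      rw [h1, h2, if_pos he]; ring
    · have h1 : tl σ' e = tl σ e := tl_of_same (by simp [hσ', he])
      have h2 : hd σ' e = hd σ e := hd_of_same (by simp [hσ', he])
      rw [h1, h2, if_neg he]; ring
  have key : dffS σ' x = dffS σ x + ∑ e : G.edgeSet,
      (if e ∈ L then 2 * ((if hd σ e = x then (1:ℤ) else 0)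
          - (if tl σ e = x then 1 else 0)) else 0) := by
    unfold dffS
    rw [← Finset.sum_add_distrib]
    exact Finset.sum_congr rfl fun e _ => step e
  rw [key]
  congr 1
  have h1 : (∑ e : G.edgeSet, (if e ∈ L then 2 * ((if hd σ e = x then (1:ℤ) else 0)
          - (if tl σ e = x then 1 else 0)) else 0))
      = ∑ e ∈ L.toFinset, 2 * ((if hd σ e = x then (1:ℤ) else 0)
          - (if tl σ e = x then 1 else 0)) := by
    rw [← Finset.sum_filter]
    exact Finset.sum_congr (by ext e; simp) (fun _ _ => rfl)
  rw [h1, ← Finset.mul_sum, Finset.sum_sub_distrib,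
    sum_ite_toFinset (fun e => hd σ e = x) L hN, sum_ite_toFinset (fun e => tl σ e = x) L hN]

def Reach (σ : G.edgeSet → Bool) (a b : V) : Prop := ∃ L, IsWalk σ a b L

lemma improve (σ : G.edgeSet → Bool) (v : V) (hv : 2 ≤ dffS σ v) :
    ∃ σ' : G.edgeSet → Bool, (∑ x : V, |dffS σ' x|) < ∑ x : V, |dffS σ x| := by
  classical
  set S : Finset V := univ.filter (fun u => Reach σ v u) with hS
  have hvS : v ∈ S := by
    simp only [hS, Finset.mem_filter, Finset.mem_univ, true_and]
    exact ⟨[], IsWalk.nil v⟩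
  have hclosed : ∀ e : G.edgeSet, tl σ e ∈ S → hd σ e ∈ S := by
    intro e he
    simp only [hS, Finset.mem_filter, Finset.mem_univ, true_and] at he ⊢
    obtain ⟨L, hL⟩ := he
    exact ⟨L ++ [e], walk_append hL (IsWalk.cons e rfl rfl (IsWalk.nil _))⟩
  have hsum : ∑ u ∈ S, dffS σ u ≤ 0 := by
    have swap : ∑ u ∈ S, dffS σ u
        = ∑ e : G.edgeSet, ((if tl σ e ∈ S then (1:ℤ) else 0) - (if hd σ e ∈ S then 1 else 0)) := by
      unfold dffS
      rw [Finset.sum_comm]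
      refine Finset.sum_congr rfl fun e _ => ?_
      rw [Finset.sum_sub_distrib, Finset.sum_ite_eq, Finset.sum_ite_eq]
    rw [swap]
    refine Finset.sum_nonpos fun e _ => ?_
    by_cases ht : tl σ e ∈ S
    · rw [if_pos ht, if_pos (hclosed e ht)]; norm_num
    · rw [if_neg ht]
      by_cases hh : hd σ e ∈ S <;> simp [hh]
  obtain ⟨u, huS, hu⟩ : ∃ u ∈ S, dffS σ u < 0 := by
    by_contra hcon
    push_neg at hcon
    have h1 : ∑ u ∈ S, dffS σ u = dffS σ v + ∑ u ∈ S.erase v, dffS σ u := by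
      rw [← Finset.sum_erase_add _ _ hvS]; ring
    have h2 : (0:ℤ) ≤ ∑ u ∈ S.erase v, dffS σ u :=
      Finset.sum_nonneg fun u hu => hcon u (Finset.mem_of_mem_erase hu)
    omega
  have hne : u ≠ v := fun h => by rw [h] at hu; omega
  obtain ⟨L0, hL0⟩ : Reach σ v u := (Finset.mem_filter.mp huS).2
  obtain ⟨L, hW, hN⟩ := exists_nodup_walk hL0
  refine ⟨fun e => if e ∈ L then !σ e else σ e, ?_⟩
  have key : ∀ x, dffS (fun e => if e ∈ L then !σ e else σ e) x
      = dffS σ x + 2 * ((if x = u then (1:ℤ) else 0) - (if x = v then 1 else 0)) := by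
    intro x
    rw [dffS_flip σ L hN x, walk_count hW x]
  set σ' : G.edgeSet → Bool := fun e => if e ∈ L then !σ e else σ e with hσ'
  have hdiff : ∑ x : V, (|dffS σ' x| - |dffS σ x|) ≤ -2 := by
    have hzero : ∀ x ∈ (univ : Finset V), x ∉ ({v, u} : Finset V) →
        |dffS σ' x| - |dffS σ x| = 0 := by
      intro x _ hx
      simp only [Finset.mem_insert, Finset.mem_singleton] at hx
      push_neg at hx
      rw [key x, if_neg (fun h => hx.2 h), if_neg (fun h => hx.1 h)]
      ring_nf
    have hsub : ∑ x : V, (|dffS σ' x| - |dffS σ x|)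
        = ∑ x ∈ ({v, u} : Finset V), (|dffS σ' x| - |dffS σ x|) :=
      (Finset.sum_subset (Finset.subset_univ _) hzero).symm
    rw [hsub, Finset.sum_pair (fun h => hne h.symm)]
    have hv' : |dffS σ' v| - |dffS σ v| = -2 := by
      rw [key v, if_neg (fun h => hne h.symm), if_pos rfl]
      have h1 : |dffS σ v| = dffS σ v := abs_of_nonneg (by omega)
      have h2 : |dffS σ v + 2 * (0 - 1)| = dffS σ v - 2 := abs_of_nonneg (by omega)
      rw [h2, h1]; ring
    have hu' : |dffS σ' u| - |dffS σ u| ≤ 0 := by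
      rw [key u, if_pos rfl, if_neg hne]
      have h1 : |dffS σ u| = -dffS σ u := abs_of_nonpos (by omega)
      have h2 : |dffS σ u + 2 * (1 - 0)| ≤ -dffS σ u := by
        rw [abs_le]; constructor <;> omega
      omega
    omega
  have := Finset.sum_sub_distrib (s := (univ : Finset V))
    (f := fun x => |dffS σ' x|) (g := fun x => |dffS σ x|)
  omega

lemma dffS_not (σ : G.edgeSet → Bool) (x : V) :
    dffS (fun e => !σ e) x = -dffS σ x := by
  unfold dffS
  rw [← Finset.sum_neg_distrib]
  refine Finset.sum_congr rfl fun e _ => ?_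
  rw [tl_of_flip (σ := σ) (σ' := fun e => !σ e) rfl, hd_of_flip (σ := σ) (σ' := fun e => !σ e) rfl]
  ring

lemma balanced : ∃ σ : G.edgeSet → Bool, ∀ v : V, |dffS σ v| ≤ 1 := by
  classical
  obtain ⟨σ0, -, hmin⟩ := Finset.exists_min_image (univ : Finset (G.edgeSet → Bool))
    (fun σ => ∑ x : V, |dffS σ x|) ⟨fun _ => true, Finset.mem_univ _⟩
  have upper : ∀ (σ : G.edgeSet → Bool),
      (∑ x : V, |dffS σ x|) = (∑ x : V, |dffS σ0 x|) → ∀ v, dffS σ v ≤ 1 := by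
    intro σ hσ v
    by_contra hcon
    push_neg at hcon
    obtain ⟨σ', hσ'⟩ := improve σ v (by omega)
    have := hmin σ' (Finset.mem_univ _)
    omega
  refine ⟨σ0, fun v => ?_⟩
  have h1 : dffS σ0 v ≤ 1 := upper σ0 rfl v
  have h2 : dffS (fun e => !σ0 e) v ≤ 1 := by
    refine upper _ ?_ v
    refine Finset.sum_congr rfl fun x _ => ?_
    rw [dffS_not, abs_neg]
  rw [dffS_not] at h2
  rw [abs_le]; omega

noncomputable def orient (σ : G.edgeSet → Bool) : GraphOrientation G :=
  ⟨tl σ, hd σ, eq_mk σ⟩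

lemma dffS_eq (σ : G.edgeSet → Bool) (v : V) :
    (outDeg (orient σ) v : ℤ) - (inDeg (orient σ) v : ℤ) = dffS σ v := by
  unfold outDeg inDeg orient dffS
  rw [Finset.sum_sub_distrib, Finset.card_filter, Finset.card_filter]
  push_cast
  rfl

end BalancedAux

/-- every graph has an orientation with |d⁺(v) − d⁻(v)| ≤ 1 for all v. -/
theorem exists_balanced_orientation {V : Type*} [Fintype V] [DecidableEq V]
    (G : SimpleGraph V) [Fintype G.edgeSet] :
    ∃ D : GraphOrientation G, ∀ v : V, |(outDeg D v : ℤ) - (inDeg D v : ℤ)| ≤ 1 := by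
  obtain ⟨σ, hσ⟩ := BalancedAux.balanced (G := G)
  exact ⟨BalancedAux.orient σ, fun v => by rw [BalancedAux.dffS_eq]; exact hσ v⟩
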